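/- Let M be the 3×3 real matrix with 0 on the diagonal and 1/2 in every off-diagonal entry, and let (aₙ) be defined by a₁ = a₂ = 1 and aₙ = aₙ₋₁ + 2aₙ₋₂ for n ≥ 3. Then for every n ≥ 2, the matrix power Mⁿ is the matrix whose diagonal entries all equal aₙ₋₁/2ⁿ⁻¹ and whose off-diagonal entries all equal aₙ/2ⁿ. -/

import Mathlib

/-- The matrix of the triangle transformation: zero diagonal, 1/2 off-diagonal. -/
noncomputable def M : Matrix (Fin 3) (Fin 3) ℝ :=
  fun i j => if i = j then 0 else 1 / 2

theorem matrix_power_formula (a : ℕ → ℝ) (h1 : a 1 = 1) (h2 : a 2 = 1)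
    (hrec : ∀ n, 3 ≤ n → a n = a (n - 1) + 2 * a (n - 2)) :
    ∀ n, 2 ≤ n →
      M ^ n = fun i j =>
        if i = j then a (n - 1) / 2 ^ (n - 1) else a n / 2 ^ n := by
  intro n hn
  induction n, hn using Nat.le_induction with
  | base =>
    ext i j
    simp only [pow_two, Matrix.mul_apply, Fin.sum_univ_three, M]
    fin_cases i <;> fin_cases j <;> norm_num [h1, h2, Fin.ext_iff]
  | succ n hn ih =>
    obtain ⟨m, rfl⟩ : ∃ m, n = m + 2 := ⟨n - 2, by omega⟩
    have hrec' := hrec (m + 3) (by omega)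
    simp only [show m + 3 - 1 = m + 2 from rfl, show m + 3 - 2 = m + 1 from rfl] at hrec'
    ext i j
    rw [pow_succ, Matrix.mul_apply, ih]
    simp only [Matrix.mul_apply, Fin.sum_univ_three, M,
      show m + 2 - 1 = m + 1 from rfl, show m + 2 + 1 = m + 3 from rfl,
      show m + 3 - 1 = m + 2 from rfl]
    have h2m : (2:ℝ) ^ (m+1) ≠ 0 := by positivity
    fin_cases i <;> fin_cases j <;>
      simp [hrec', pow_succ, Fin.ext_iff] <;> field_simp <;> ring
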